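/- The ideal I = (x_1x_2, x_1x_3, x_2^2, x_2x_3) in K[x_1,x_2,x_3] arises from the compatible connected shifted quasi-Ferrers diagram with λ = (3,3), μ = (1,1), but I is not a stable monomial ideal, nor does it become stable under any permutation of the variables x_1, x_2, x_3. -/

import Mathlib

open MvPolynomial Finsupp

/-- The monomial ideal generated by the monomials with exponent vectors in `S`. -/
noncomputable def monomialIdeal (K : Type*) [Field K] {n : ℕ} (S : Finset (Fin n →₀ ℕ)) :
    Ideal (MvPolynomial (Fin n) K) :=
  Ideal.span ((fun s => (monomial s (1 : K))) '' S)

/-- `I` is a stable monomial ideal: for every monomial `m ∈ I` and every `i < max(m)`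
(where `j = max(m)` is the largest index with nonzero exponent), `m·x_i/x_j ∈ I`.
Here the variables `x_1,…,x_n` are indexed by `Fin n`. -/
def IsStable {K : Type*} [Field K] {n : ℕ} (I : Ideal (MvPolynomial (Fin n) K)) : Prop :=
  ∀ (s : Fin n →₀ ℕ) (i j : Fin n), monomial s (1 : K) ∈ I →
    s j ≠ 0 → (∀ k, j < k → s k = 0) → i < j →
    monomial (s + single i 1 - single j 1) (1 : K) ∈ I

/-- The diagram `D_{λ−μ}` for `λ = (3,3)`, `μ = (1,1)`, i.e. `{(1,2),(1,3),(2,2),(2,3)}`,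
with the point `(i,j)` recorded as the pair of variable indices `(i−1, j−1)` in `Fin 3`. -/
def exampleDiagram : Finset (Fin 3 × Fin 3) := {(0, 1), (0, 2), (1, 1), (1, 2)}

/-- Membership of a monomial in a monomial ideal: some generator's exponent vector
is dominated by the monomial's exponent vector. -/
lemma mem_span_iff' {K : Type*} [Field K] {S : Set (Fin 3 →₀ ℕ)} {t : Fin 3 →₀ ℕ} :
    monomial t (1:K) ∈ Ideal.span ((fun s => monomial s (1:K)) '' S) ↔ ∃ s ∈ S, s ≤ t := by
  rw [mem_ideal_span_monomial_image]; simp [support_monomial]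

lemma not_le_pair' {p q a : Fin 3} (h : p ≠ a ∨ q ≠ a) :
    ¬ ((single p 1 + single q 1 : Fin 3 →₀ ℕ) ≤ single a 2) := by
  intro hle
  rcases h with h | h
  · have := Finsupp.le_def.mp hle p
    simp [Finsupp.single_apply, Ne.symm h] at this
  · have := Finsupp.le_def.mp hle q
    simp [Finsupp.single_apply, Ne.symm h] at this

lemma not_single2_le' {c a : Fin 3} (h : c ≠ a) :
    ¬ ((single c 2 : Fin 3 →₀ ℕ) ≤ single a 2) := by
  intro hle
  have := Finsupp.le_def.mp hle c
  simp [Finsupp.single_apply, Ne.symm h] at this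

/-- If `x_a x_b ∈ J` (with `a < b`) but `x_a² ∉ J`, then `J` is not stable. -/
lemma not_stable_of' {K : Type*} [Field K] (J : Ideal (MvPolynomial (Fin 3) K)) (a b : Fin 3)
    (hab : a < b) (hmem : monomial (single a 1 + single b 1) (1:K) ∈ J)
    (hnot : monomial (single a 2) (1:K) ∉ J) : ¬ IsStable J := by
  intro h
  apply hnot
  have hb : ((single a 1 + single b 1 : Fin 3 →₀ ℕ)) b ≠ 0 := by
    simp [Finsupp.single_apply]
  have hk : ∀ k, b < k → (single a 1 + single b 1 : Fin 3 →₀ ℕ) k = 0 := by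
    intro k hk
    simp [Finsupp.single_apply, (hab.trans hk).ne, hk.ne]
  have := h _ a b hmem hb hk hab
  have heq : (single a 1 + single b 1) + single a 1 - single b 1 = (single a 2 : Fin 3 →₀ ℕ) := by
    rw [add_right_comm, add_tsub_cancel_right, ← Finsupp.single_add]
  rwa [heq] at this

lemma map_monomialIdeal {K : Type*} [Field K] (π : Equiv.Perm (Fin 3))
    (S : Finset (Fin 3 →₀ ℕ)) :
    Ideal.map (rename π) (monomialIdeal K S) =
      Ideal.span ((fun s => monomial s (1:K)) '' (Finsupp.mapDomain π '' ↑S)) := by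
  unfold monomialIdeal
  rw [Ideal.map_span]
  congr 1
  rw [Set.image_image, Set.image_image]
  simp [rename_monomial]

/-- For any permutation `π` with `π 1 ≠ a` and `{π 0, π 2} = {a, b}` (`a < b`),
the image of `I` under renaming by `π` is not stable. -/
lemma perm_not_stable (K : Type*) [Field K] (π : Equiv.Perm (Fin 3)) (a b : Fin 3)
    (hab : a < b) (h1 : π 1 ≠ a)
    (hp : (π 0 = a ∧ π 2 = b) ∨ (π 0 = b ∧ π 2 = a)) :
    ¬ IsStable (Ideal.map (rename π)
      (monomialIdeal K ({single 0 1 + single 1 1, single 0 1 + single 2 1,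
        single 1 2, single 1 1 + single 2 1} : Finset (Fin 3 →₀ ℕ)))) := by
  rw [map_monomialIdeal]
  apply not_stable_of' _ a b hab
  · rw [mem_span_iff']
    refine ⟨Finsupp.mapDomain π (single 0 1 + single 2 1), ⟨_, by simp, rfl⟩, le_of_eq ?_⟩
    rw [mapDomain_add, mapDomain_single, mapDomain_single]
    rcases hp with ⟨ha, hb⟩ | ⟨ha, hb⟩ <;> rw [ha, hb]
    exact add_comm _ _
  · rw [mem_span_iff']
    rintro ⟨s, ⟨u, hu, rfl⟩, hle⟩
    simp only [Finset.coe_insert, Set.mem_insert_iff, Finset.coe_singleton,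
      Set.mem_singleton_iff] at hu
    have h02 : π 0 ≠ a ∨ π 2 ≠ a := by
      rcases hp with ⟨ha, hb⟩ | ⟨ha, hb⟩
      · exact Or.inr (hb ▸ hab.ne')
      · exact Or.inl (ha ▸ hab.ne')
    rcases hu with rfl | rfl | rfl | rfl
    · rw [mapDomain_add, mapDomain_single, mapDomain_single] at hle
      exact not_le_pair' (Or.inr h1) hle
    · rw [mapDomain_add, mapDomain_single, mapDomain_single] at hle
      exact not_le_pair' h02 hle
    · rw [mapDomain_single] at hle
      exact not_single2_le' h1 hle
    · rw [mapDomain_add, mapDomain_single, mapDomain_single] at hle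
      exact not_le_pair' (Or.inl h1) hle

lemma fin3cases (x : Fin 3) : x = 0 ∨ x = 1 ∨ x = 2 := by
  fin_cases x <;> simp

/-- The ideal `I = (x_1x_2, x_1x_3, x_2², x_2x_3) ⊆ K[x_1,x_2,x_3]` arises as the
specialization of the compatible connected shifted quasi-Ferrers diagram with
`λ = (3,3)`, `μ = (1,1)`, but `I` is not stable, nor does it become stable under any
permutation of the variables. -/
theorem example_compatible_not_stable (K : Type*) [Field K] :
    monomialIdeal K (exampleDiagram.image fun p => single p.1 1 + single p.2 1) =
      monomialIdeal K ({single 0 1 + single 1 1, single 0 1 + single 2 1,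
        single 1 2, single 1 1 + single 2 1} : Finset (Fin 3 →₀ ℕ)) ∧
    ¬ IsStable (monomialIdeal K ({single 0 1 + single 1 1, single 0 1 + single 2 1,
        single 1 2, single 1 1 + single 2 1} : Finset (Fin 3 →₀ ℕ))) ∧
    ∀ π : Equiv.Perm (Fin 3),
      ¬ IsStable (Ideal.map (rename π)
        (monomialIdeal K ({single 0 1 + single 1 1, single 0 1 + single 2 1,
          single 1 2, single 1 1 + single 2 1} : Finset (Fin 3 →₀ ℕ)))) := by
  refine ⟨?_, ?_, ?_⟩
  · have hset : exampleDiagram.image (fun p => single p.1 1 + single p.2 1) =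
        ({single 0 1 + single 1 1, single 0 1 + single 2 1,
          single 1 2, single 1 1 + single 2 1} : Finset (Fin 3 →₀ ℕ)) := by
      simp [exampleDiagram, Finset.image_insert, ← Finsupp.single_add]
    rw [hset]
  · apply not_stable_of' _ 0 2 (by decide)
    · rw [monomialIdeal, mem_span_iff']
      exact ⟨single 0 1 + single 2 1, by simp, le_refl _⟩
    · rw [monomialIdeal, mem_span_iff']
      rintro ⟨s, hs, hle⟩
      simp only [Finset.coe_insert, Set.mem_insert_iff, Finset.coe_singleton,
        Set.mem_singleton_iff] at hs
      rcases hs with rfl | rfl | rfl | rfl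
      · exact not_le_pair' (Or.inr (by decide)) hle
      · exact not_le_pair' (Or.inr (by decide)) hle
      · exact not_single2_le' (by decide) hle
      · exact not_le_pair' (Or.inl (by decide)) hle
  · intro π
    rcases fin3cases (π 0) with h0 | h0 | h0 <;>
      rcases fin3cases (π 1) with h1 | h1 | h1 <;>
      rcases fin3cases (π 2) with h2 | h2 | h2 <;>
      first
        | exact absurd (π.injective (h0.trans h1.symm)) (by decide)
        | exact absurd (π.injective (h0.trans h2.symm)) (by decide)
        | exact absurd (π.injective (h1.trans h2.symm)) (by decide)
        | exact perm_not_stable K π 1 2 (by decide) (by rw [h1]; decide)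
            (by rw [h0, h2]; decide)
        | exact perm_not_stable K π 0 2 (by decide) (by rw [h1]; decide)
            (by rw [h0, h2]; decide)
        | exact perm_not_stable K π 0 1 (by decide) (by rw [h1]; decide)
            (by rw [h0, h2]; decide)
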